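/- Covering (I,J̄)-forests are in bijection with ν-Schröder trees, where ν is the lattice path read from the interleaving of I and J̄. -/

import Mathlib

/-- Steps of a (Schröder) lattice path: north, east, diagonal. -/
inductive Step : Type
  | N | E | D
deriving DecidableEq, Repr

/-- Total horizontal displacement of a path. -/
def eLen (p : List Step) : ℕ := p.count Step.E + p.count Step.D

/-- Total vertical displacement of a path. -/
def nLen (p : List Step) : ℕ := p.count Step.N + p.count Step.D

/-- A lattice path uses only `N` and `E` steps. -/
def IsLatticePath (ν : List Step) : Prop := Step.D ∉ ν

/-- `colVal p x` is twice the starting height of the step of `p` crossing the vertical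
strip between abscissas `x` and `x+1`, plus `1` if that step is diagonal.  Comparing these
values columnwise is equivalent to comparing the heights of the paths over each strip. -/
def colVal : List Step → ℕ → ℕ
  | [], _ => 0
  | Step.N :: p, x => colVal p x + 2
  | Step.E :: _, 0 => 0
  | Step.E :: p, x+1 => colVal p x
  | Step.D :: _, 0 => 1
  | Step.D :: p, x+1 => colVal p x + 2

/-- `π` stays weakly above `ρ` (same endpoints intended). -/
def WeaklyAbove (π ρ : List Step) : Prop := ∀ x, colVal ρ x ≤ colVal π x

/-- Replace every peak (consecutive `NE`) of a path by a diagonal step; applied to `ν`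
this gives the path `μ` of the large ν-Schröder path definition. -/
def cutPeaks : List Step → List Step
  | [] => []
  | Step.N :: Step.E :: p => Step.D :: cutPeaks p
  | s :: p => s :: cutPeaks p

/-- A ν-Dyck path: an `N,E` path with the same endpoints as `ν` staying weakly above `ν`. -/
def IsNuDyck (ν π : List Step) : Prop :=
  Step.D ∉ π ∧ eLen π = eLen ν ∧ nLen π = nLen ν ∧ WeaklyAbove π ν

/-- A (small) ν-Schröder path: an `N,E,D` path with the same endpoints as `ν` staying weakly
above `ν` (this automatically forbids diagonal steps on the ν-diagonal). -/
def IsSmallSchroder (ν π : List Step) : Prop :=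
  eLen π = eLen ν ∧ nLen π = nLen ν ∧ WeaklyAbove π ν

/-- A large ν-Schröder path: an `N,E,D` path with the same endpoints as `ν` staying weakly
above the path obtained from `ν` by replacing each peak by a diagonal step. -/
def IsLargeSchroder (ν π : List Step) : Prop :=
  eLen π = eLen ν ∧ nLen π = nLen ν ∧ WeaklyAbove π (cutPeaks ν)

/-- Number of peaks (consecutive `NE` pairs). -/
def peaks (p : List Step) : ℕ := (p.zip p.tail).count (Step.N, Step.E)

/-- Number of valleys (consecutive `EN` pairs). -/
def valleys (p : List Step) : ℕ := (p.zip p.tail).count (Step.E, Step.N)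

/-- Lattice points at which valleys of a path occur (starting the path at `(x,y)`). -/
def valleyPts : List Step → ℕ → ℕ → List (ℕ × ℕ)
  | [], _, _ => []
  | Step.E :: p, x, y =>
      (if p.head? = some Step.N then [(x+1, y)] else []) ++ valleyPts p (x+1) y
  | Step.N :: p, x, y => valleyPts p x (y+1)
  | Step.D :: p, x, y => valleyPts p (x+1) (y+1)

/-- Lattice points at which high peaks (peaks strictly above `ν`) of a path occur. -/
def highPeakPts (ν : List Step) : List Step → ℕ → ℕ → List (ℕ × ℕ)
  | [], _, _ => []
  | Step.N :: p, x, y =>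
      (if p.head? = some Step.E ∧ colVal ν x < 2*(y+1) then [(x, y+1)] else []) ++
        highPeakPts ν p x (y+1)
  | Step.E :: p, x, y => highPeakPts ν p (x+1) y
  | Step.D :: p, x, y => highPeakPts ν p (x+1) (y+1)

/-- Number of high peaks of `π` relative to `ν`. -/
def highPeaks (ν π : List Step) : ℕ := (highPeakPts ν π 0 0).length

/-- j-th ν-Narayana number: number of ν-Dyck paths with exactly `j` valleys. -/
noncomputable def Nar (ν : List Step) (j : ℕ) : ℕ :=
  Nat.card {π : List Step // IsNuDyck ν π ∧ valleys π = j}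

/-- Number of small ν-Schröder paths with exactly `i` diagonal steps. -/
noncomputable def schNum (ν : List Step) (i : ℕ) : ℕ :=
  Nat.card {π : List Step // IsSmallSchroder ν π ∧ π.count Step.D = i}

/-- `lowH ν x` is the lowest height of a point of `ν` at abscissa `x`. -/
def lowH : List Step → ℕ → ℕ
  | _, 0 => 0
  | [], _+1 => 0
  | Step.N :: p, x+1 => lowH p (x+1) + 1
  | Step.E :: p, x+1 => lowH p x
  | Step.D :: p, x+1 => lowH p x + 1

/-- The lowest lattice path from `(0,0)` to `(b,a)` weakly above the line segment
from `(0,0)` to `(b,a)`. -/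
def nuAB (a b : ℕ) : List Step :=
  (List.range b).flatMap (fun x =>
    List.replicate (((x+1)*a + b - 1)/b - (x*a + b - 1)/b) Step.N ++ [Step.E])

/-- Number of large rational `(a,b)`-Schröder paths with `i` diagonal steps. -/
noncomputable def largeCount (a b i : ℕ) : ℕ :=
  Nat.card {π : List Step // IsLargeSchroder (nuAB a b) π ∧ π.count Step.D = i}

/-- Number of small rational `(a,b)`-Schröder paths with `i` diagonal steps. -/
noncomputable def smallCount (a b i : ℕ) : ℕ :=
  Nat.card {π : List Step // IsSmallSchroder (nuAB a b) π ∧ π.count Step.D = i}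

/-- Binomial coefficient with an integer lower entry (zero when negative). -/
def chooseZ (n : ℕ) (k : ℤ) : ℕ := if 0 ≤ k then n.choose k.toNat else 0

/-- The region weakly above `ν` in the rectangle `[0,b] × [0,a]`. -/
def InRegion (ν : List Step) (p : ℕ × ℕ) : Prop :=
  p.1 ≤ eLen ν ∧ p.2 ≤ nLen ν ∧ lowH ν p.1 ≤ p.2

/-- Two points of the region are ν-incompatible if one is strictly southwest of the other and
the rectangle they span lies in the region (equivalently its bottom-right corner does). -/
def Incompat (ν : List Step) (p q : ℕ × ℕ) : Prop :=
  ((p.1 < q.1 ∧ p.2 < q.2) ∨ (q.1 < p.1 ∧ q.2 < p.2)) ∧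
    InRegion ν (max p.1 q.1, min p.2 q.2)

/-- A ν-binary tree: a maximal set of pairwise ν-compatible points of the region. -/
def IsBinaryTree (ν : List Step) (T : Finset (ℕ × ℕ)) : Prop :=
  (∀ p ∈ T, InRegion ν p) ∧ (∀ p ∈ T, ∀ q ∈ T, ¬ Incompat ν p q) ∧
    ∀ r, InRegion ν r → (∀ p ∈ T, ¬ Incompat ν r p) → r ∈ T

/-- A ν-Schröder tree: pairwise ν-compatible points of the region containing the root
`(0,a)` and meeting every row and every column. -/
def IsSchroderTree (ν : List Step) (T : Finset (ℕ × ℕ)) : Prop :=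
  (∀ p ∈ T, InRegion ν p) ∧ (∀ p ∈ T, ∀ q ∈ T, ¬ Incompat ν p q) ∧
    (0, nLen ν) ∈ T ∧ (∀ y ≤ nLen ν, ∃ p ∈ T, p.2 = y) ∧ (∀ x ≤ eLen ν, ∃ p ∈ T, p.1 = x)

/-- One contraction step: delete a node, provided the result is still a ν-Schröder tree. -/
def ContractStep (ν : List Step) (T T' : Finset (ℕ × ℕ)) : Prop :=
  ∃ q ∈ T, T' = T.erase q ∧ IsSchroderTree ν T'

/-- `p` is a leaf of the (plane tree associated to the) node set `T`: no node strictly below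
it in its column and none strictly to its right in its row. -/
def IsLeafIn (T : Finset (ℕ × ℕ)) (p : ℕ × ℕ) : Prop :=
  (∀ q ∈ T, ¬(q.1 = p.1 ∧ q.2 < p.2)) ∧ (∀ q ∈ T, ¬(q.2 = p.2 ∧ p.1 < q.1))

/-- Starting points of vertical runs and ending points of horizontal runs of `ν`. -/
def leafPts (ν : List Step) : Finset (ℕ × ℕ) :=
  (valleyPts ν 0 0).toFinset ∪ (if ν.head? = some Step.N then {((0 : ℕ), (0 : ℕ))} else ∅) ∪
    (if ν.getLast? = some Step.E then {(eLen ν, nLen ν)} else ∅)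

/-- `horizNu ν x y`: maximal number of east steps that can be placed starting at `(x,y)`
before crossing `ν` (staying within the bounding rectangle). -/
def horizNu (ν : List Step) (x y : ℕ) : ℕ :=
  ((Finset.Icc 1 (eLen ν - x)).filter (fun k => lowH ν (x + k) ≤ y)).card

/-- No `N` step of the given path (started at `(x,y)`) has initial point with
`horizNu`-value `h`. -/
def noNAt (ν : List Step) (h : ℕ) : List Step → ℕ → ℕ → Prop
  | [], _, _ => True
  | Step.N :: p, x, y => horizNu ν x y ≠ h ∧ noNAt ν h p x (y+1)
  | Step.E :: p, x, y => noNAt ν h p (x+1) y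
  | Step.D :: p, x, y => noNAt ν h p (x+1) (y+1)

/-- Right contraction: replace a consecutive `EN` pair (a valley) by a `D` step. -/
def RightC (μ lam : List Step) : Prop :=
  ∃ p q, μ = p ++ Step.E :: Step.N :: q ∧ lam = p ++ Step.D :: q

/-- Left contraction: delete an `E` step together with the most recent preceding `N` step
whose initial point has the same `horizNu` statistic as the initial point of the `E` step,
shift the intermediate subpath, and place a `D` step at the initial point of the `N` step. -/
def LeftC (ν μ lam : List Step) : Prop :=
  ∃ p m q, μ = p ++ Step.N :: (m ++ Step.E :: q) ∧ lam = p ++ Step.D :: (m ++ q) ∧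
    horizNu ν (eLen p) (nLen p)
      = horizNu ν (eLen (p ++ Step.N :: m)) (nLen (p ++ Step.N :: m)) ∧
    noNAt ν (horizNu ν (eLen (p ++ Step.N :: m)) (nLen (p ++ Step.N :: m)))
      m (eLen p) (nLen p + 1)

/-- Diagonal contraction: delete an `E` step ending at the initial point `r` of a `D` step,
together with the most recent preceding `N` step whose initial point `s` satisfies
`horizNu s = horizNu r`, shift the intermediate subpath, and place a `D` step at `s`. -/
def DiagC (ν μ lam : List Step) : Prop :=
  ∃ p m q, μ = p ++ Step.N :: (m ++ Step.E :: Step.D :: q) ∧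
    lam = p ++ Step.D :: (m ++ Step.D :: q) ∧
    horizNu ν (eLen p) (nLen p)
      = horizNu ν (eLen (p ++ Step.N :: m) + 1) (nLen (p ++ Step.N :: m)) ∧
    noNAt ν (horizNu ν (eLen (p ++ Step.N :: m) + 1) (nLen (p ++ Step.N :: m)))
      m (eLen p) (nLen p + 1)

/-- Cover relation of the contraction poset of ν-Schröder paths. -/
def Covers (ν μ lam : List Step) : Prop :=
  IsSmallSchroder ν μ ∧ IsSmallSchroder ν lam ∧
    (RightC μ lam ∨ LeftC ν μ lam ∨ DiagC ν μ lam)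

/-- The Morse matching: `σ` (having a `D` step preceded by no valley) is matched with the
path `π` obtained by replacing the first such `D` step by `EN`. -/
def MorseM (ν : List Step) : Set (List Step × List Step) :=
  { z | ∃ p q, Step.D ∉ p ∧ valleys p = 0 ∧
      z.2 = p ++ Step.D :: q ∧ z.1 = p ++ Step.E :: Step.N :: q ∧ IsSmallSchroder ν z.2 }

/-- Twice the area between a small ν-Schröder path and `ν`. -/
def area2 (ν π : List Step) : ℕ :=
  ∑ x ∈ Finset.range (eLen ν), (colVal π x - colVal ν x)

/-- An `(I,J̄)`-forest: increasing, non-crossing arcs. -/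
def IsIJForest (I J : Finset ℕ) (F : Finset (ℕ × ℕ)) : Prop :=
  (∀ a ∈ F, a.1 ∈ I ∧ a.2 ∈ J ∧ a.1 < a.2) ∧
    (∀ a ∈ F, ∀ a' ∈ F, ¬(a.1 < a'.1 ∧ a'.1 < a.2 ∧ a.2 < a'.2))

/-- A covering `(I,J̄)`-forest: contains the arc `(1,n)` and has no isolated node. -/
def IsCoveringForest (n : ℕ) (I J : Finset ℕ) (F : Finset (ℕ × ℕ)) : Prop :=
  IsIJForest I J F ∧ (1, n) ∈ F ∧
    (∀ i ∈ I, ∃ a ∈ F, a.1 = i) ∧ (∀ j ∈ J, ∃ a ∈ F, a.2 = j)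

/-- The lattice path read off from the interleaving of `I` and `J̄` (elements `2,…,n-1`,
`E` for elements of `I`, `N` for the others). -/
def nuOf (n : ℕ) (I : Finset ℕ) : List Step :=
  (List.range' 2 (n - 2)).map (fun k => if k ∈ I then Step.E else Step.N)

namespace Stmt17
open Finset

def rkS (S : Finset ℕ) (i : ℕ) : ℕ := (S.filter (· < i)).card

lemma rkS_mono (S : Finset ℕ) {i i' : ℕ} (h : i ≤ i') : rkS S i ≤ rkS S i' :=
  Finset.card_le_card (Finset.monotone_filter_right _ (fun k _ hk => lt_of_lt_of_le hk h))

lemma rkS_lt (S : Finset ℕ) {i i' : ℕ} (hi : i ∈ S) (h : i < i') : rkS S i < rkS S i' := by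
  have hsub : S.filter (· < i) ⊆ S.filter (· < i') :=
    Finset.monotone_filter_right _ (fun k _ hk => lt_trans hk h)
  exact Finset.card_lt_card ((Finset.ssubset_iff_of_subset hsub).2
    ⟨i, Finset.mem_filter.2 ⟨hi, h⟩, by simp⟩)

lemma rkS_lt_card {S : Finset ℕ} {i : ℕ} (hi : i ∈ S) : rkS S i < S.card :=
  Finset.card_lt_card ((Finset.ssubset_iff_of_subset (Finset.filter_subset _ _)).2
    ⟨i, hi, by simp⟩)

lemma rkS_injOn {S : Finset ℕ} {i i' : ℕ} (hi : i ∈ S) (hi' : i' ∈ S)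
    (h : rkS S i = rkS S i') : i = i' := by
  rcases lt_trichotomy i i' with hl | he | hl
  · exact absurd h (Nat.ne_of_lt (rkS_lt S hi hl))
  · exact he
  · exact absurd h.symm (Nat.ne_of_lt (rkS_lt S hi' hl))

lemma rkS_lt_iff {S : Finset ℕ} {i i' : ℕ} (hi : i ∈ S) (hi' : i' ∈ S) :
    rkS S i < rkS S i' ↔ i < i' := by
  constructor
  · intro h
    rcases lt_trichotomy i i' with hl | he | hl
    · exact hl
    · subst he; omega
    · exact absurd (rkS_lt S hi' hl) (by omega)
  · exact rkS_lt S hi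

lemma rkS_surj {S : Finset ℕ} {x : ℕ} (hx : x < S.card) : ∃ i ∈ S, rkS S i = x := by
  have himg : S.image (rkS S) = Finset.range S.card := by
    apply Finset.eq_of_subset_of_card_le
    · intro y hy
      obtain ⟨i, hi, rfl⟩ := Finset.mem_image.1 hy
      exact Finset.mem_range.2 (rkS_lt_card hi)
    · rw [Finset.card_range, Finset.card_image_of_injOn
        (fun i hi i' hi' h => rkS_injOn (Finset.mem_coe.1 hi) (Finset.mem_coe.1 hi') h)]
  obtain ⟨i, hi, h⟩ := Finset.mem_image.1 (himg ▸ Finset.mem_range.2 hx)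
  exact ⟨i, hi, h⟩

/-- mirror of `lowH` on the underlying list of naturals -/
def cbF (I : Finset ℕ) : List ℕ → ℕ → ℕ
  | _, 0 => 0
  | [], _+1 => 0
  | k :: ns, x+1 => if k ∈ I then cbF I ns x else cbF I ns (x+1) + 1

lemma lowH_map (I : Finset ℕ) : ∀ (ns : List ℕ) (x : ℕ),
    lowH (ns.map fun k => if k ∈ I then Step.E else Step.N) x = cbF I ns x := by
  intro ns
  induction ns with
  | nil => intro x; cases x <;> simp [lowH, cbF]
  | cons k ns ih =>
    intro x
    cases x with
    | zero => simp [lowH, cbF]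
    | succ x =>
      by_cases hk : k ∈ I <;> simp [lowH, cbF, hk, ih]

lemma cbF_key (I : Finset ℕ) : ∀ (m a i x : ℕ), i ∈ I → a ≤ i → i < a + m →
    ((Finset.Ico a i).filter (· ∈ I)).card = x →
    cbF I (List.range' a m) (x+1) = ((Finset.Ico a i).filter (· ∉ I)).card := by
  intro m
  induction m with
  | zero => intro a i x _ h1 h2 _; omega
  | succ m ih =>
    intro a i x hi hai him hx
    rw [List.range'_succ]
    rcases eq_or_lt_of_le hai with rfl | hlt
    · have he : Finset.Ico a a = ∅ := by simp
      rw [he] at hx ⊢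
      simp only [Finset.filter_empty, Finset.card_empty] at hx ⊢
      subst hx
      simp [cbF, hi]
    · have hins : insert a (Finset.Ico (a+1) i) = Finset.Ico a i :=
        Finset.insert_Ico_add_one_left_eq_Ico hlt
      have hnot : a ∉ Finset.Ico (a+1) i := by simp
      by_cases ha : a ∈ I
      · rw [← hins, Finset.filter_insert, if_pos ha,
          Finset.card_insert_of_notMem (fun hc => hnot (Finset.mem_filter.1 hc).1)] at hx
        obtain ⟨x', rfl⟩ : ∃ x', x = x' + 1 := ⟨_, hx.symm⟩
        have hstep : cbF I (a :: List.range' (a+1) m) (x' + 1 + 1)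
            = cbF I (List.range' (a+1) m) (x' + 1) := by simp [cbF, ha]
        rw [hstep, ih (a+1) i x' hi (by omega) (by omega) (by omega), ← hins,
          Finset.filter_insert, if_neg (by simp [ha])]
      · rw [← hins, Finset.filter_insert, if_neg ha] at hx
        have hstep : cbF I (a :: List.range' (a+1) m) (x + 1)
            = cbF I (List.range' (a+1) m) (x + 1) + 1 := by simp [cbF, ha]
        rw [hstep, ih (a+1) i x hi (by omega) (by omega) hx, ← hins,
          Finset.filter_insert, if_pos ha,
          Finset.card_insert_of_notMem (fun hc => hnot (Finset.mem_filter.1 hc).1)]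

lemma count_map_range' (I : Finset ℕ) (s : Step) : ∀ (m a : ℕ),
    ((List.range' a m).map fun k => if k ∈ I then Step.E else Step.N).count s
      = ((Finset.Ico a (a+m)).filter (fun k => (if k ∈ I then Step.E else Step.N) = s)).card := by
  intro m
  induction m with
  | zero => intro a; simp
  | succ m ih =>
    intro a
    have hrg : a + 1 + m = a + (m + 1) := by omega
    rw [List.range'_succ, List.map_cons, List.count_cons,
        ← Finset.insert_Ico_add_one_left_eq_Ico (show a < a + (m+1) by omega), Finset.filter_insert]
    have hnot : a ∉ Finset.Ico (a+1) (a + (m+1)) := by simp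
    by_cases h : (if a ∈ I then Step.E else Step.N) = s
    · rw [if_pos h, Finset.card_insert_of_notMem (fun hc => hnot (Finset.mem_filter.1 hc).1)]
      rw [ih (a+1), hrg]
      simp [h]
    · rw [if_neg h, ih (a+1), hrg]
      simp [h]

end Stmt17

namespace Stmt17
open Finset

variable {n : ℕ} {I J : Finset ℕ}

lemma eLen_nu (hn : 2 ≤ n) (hpart : I ∪ J = Finset.Icc 1 n) (hdisj : Disjoint I J)
    (h1 : 1 ∈ I) (hnJ : n ∈ J) : eLen (nuOf n I) + 1 = I.card := by
  have hnI : n ∉ I := fun h => (Finset.disjoint_left.1 hdisj h) hnJ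
  have hIcc : ∀ k ∈ I, 1 ≤ k ∧ k ≤ n := fun k hk =>
    Finset.mem_Icc.1 (hpart ▸ Finset.mem_union_left _ hk)
  have h2n : 2 + (n - 2) = n := by omega
  have hD : (nuOf n I).count Step.D = 0 := by
    rw [nuOf, Stmt17.count_map_range', h2n]
    apply Finset.card_eq_zero.2
    apply Finset.filter_eq_empty_iff.2
    intro k _
    by_cases h : k ∈ I <;> simp [h]
  have hE : (nuOf n I).count Step.E = (I.erase 1).card := by
    rw [nuOf, Stmt17.count_map_range', h2n]
    congr 1
    ext k
    simp only [Finset.mem_filter, Finset.mem_Ico, Finset.mem_erase]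
    constructor
    · rintro ⟨⟨h2, hkn⟩, hif⟩
      by_cases h : k ∈ I
      · exact ⟨by omega, h⟩
      · simp [h] at hif
    · rintro ⟨hk1, hkI⟩
      have hb := hIcc k hkI
      have hkn : k ≠ n := fun he => hnI (he ▸ hkI)
      exact ⟨⟨by omega, by omega⟩, by simp [hkI]⟩
  rw [eLen, hD, hE, Nat.add_zero, Finset.card_erase_add_one h1]

lemma nLen_nu (hn : 2 ≤ n) (hpart : I ∪ J = Finset.Icc 1 n) (hdisj : Disjoint I J)
    (h1 : 1 ∈ I) (hnJ : n ∈ J) : nLen (nuOf n I) + 1 = J.card := by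
  have h1J : (1 : ℕ) ∉ J := fun h => (Finset.disjoint_left.1 hdisj h1) h
  have hJcc : ∀ k ∈ J, 1 ≤ k ∧ k ≤ n := fun k hk =>
    Finset.mem_Icc.1 (hpart ▸ Finset.mem_union_right _ hk)
  have h2n : 2 + (n - 2) = n := by omega
  have hD : (nuOf n I).count Step.D = 0 := by
    rw [nuOf, Stmt17.count_map_range', h2n]
    apply Finset.card_eq_zero.2
    apply Finset.filter_eq_empty_iff.2
    intro k _
    by_cases h : k ∈ I <;> simp [h]
  have hN : (nuOf n I).count Step.N = (J.erase n).card := by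
    rw [nuOf, Stmt17.count_map_range', h2n]
    congr 1
    ext k
    simp only [Finset.mem_filter, Finset.mem_Ico, Finset.mem_erase]
    constructor
    · rintro ⟨⟨h2, hkn⟩, hif⟩
      have hkI : k ∉ I := by
        by_cases h : k ∈ I
        · simp [h] at hif
        · exact h
      have hk : k ∈ I ∪ J := hpart ▸ Finset.mem_Icc.2 ⟨by omega, by omega⟩
      rcases Finset.mem_union.1 hk with h | h
      · exact absurd h hkI
      · exact ⟨by omega, h⟩
    · rintro ⟨hkn, hkJ⟩
      have hb := hJcc k hkJ
      have hkI : k ∉ I := fun h => (Finset.disjoint_left.1 hdisj h) hkJ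
      have hk1 : k ≠ 1 := fun he => h1J (he ▸ hkJ)
      exact ⟨⟨by omega, by omega⟩, by simp [hkI]⟩
  rw [nLen, hD, hN, Nat.add_zero, Finset.card_erase_add_one hnJ]

lemma rk_one_of_subset {S : Finset ℕ} (hS : ∀ k ∈ S, 1 ≤ k) : rkS S 1 = 0 := by
  rw [rkS]
  apply Finset.card_eq_zero.2
  apply Finset.filter_eq_empty_iff.2
  intro k hk
  have := hS k hk
  omega

lemma rkJ_n (hn : 2 ≤ n) (hpart : I ∪ J = Finset.Icc 1 n) (hdisj : Disjoint I J)
    (h1 : 1 ∈ I) (hnJ : n ∈ J) : rkS J n = nLen (nuOf n I) := by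
  have hJcc : ∀ k ∈ J, 1 ≤ k ∧ k ≤ n := fun k hk =>
    Finset.mem_Icc.1 (hpart ▸ Finset.mem_union_right _ hk)
  have : J.filter (· < n) = J.erase n := by
    ext k
    simp only [Finset.mem_filter, Finset.mem_erase]
    constructor
    · rintro ⟨hkJ, hkn⟩; exact ⟨by omega, hkJ⟩
    · rintro ⟨hkn, hkJ⟩
      have := hJcc k hkJ
      exact ⟨hkJ, by omega⟩
  have h2 := Finset.card_erase_add_one hnJ
  have h3 := nLen_nu hn hpart hdisj h1 hnJ
  rw [rkS, this]
  omega

lemma lowH_rk (hn : 2 ≤ n) (hpart : I ∪ J = Finset.Icc 1 n) (hdisj : Disjoint I J)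
    (h1 : 1 ∈ I) (hnJ : n ∈ J) {i : ℕ} (hi : i ∈ I) :
    lowH (nuOf n I) (rkS I i) = rkS J i := by
  have hIcc : ∀ k ∈ I, 1 ≤ k ∧ k ≤ n := fun k hk =>
    Finset.mem_Icc.1 (hpart ▸ Finset.mem_union_left _ hk)
  have hJcc : ∀ k ∈ J, 1 ≤ k ∧ k ≤ n := fun k hk =>
    Finset.mem_Icc.1 (hpart ▸ Finset.mem_union_right _ hk)
  have h1J : (1 : ℕ) ∉ J := fun h => (Finset.disjoint_left.1 hdisj h1) h
  rcases eq_or_ne i 1 with rfl | hne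
  · rw [rk_one_of_subset (fun k hk => (hIcc k hk).1),
      rk_one_of_subset (fun k hk => (hJcc k hk).1)]
    simp [lowH]
  · have hbi := hIcc i hi
    have hin : i ≠ n := fun he => (Finset.disjoint_left.1 hdisj hi) (he ▸ hnJ)
    have h2i : 2 ≤ i := by omega
    have hilt : i < n := by omega
    have hA : rkS I i = ((Finset.Ico 2 i).filter (· ∈ I)).card + 1 := by
      rw [rkS]
      have he : I.filter (· < i) = insert 1 ((Finset.Ico 2 i).filter (· ∈ I)) := by
        ext k
        simp only [Finset.mem_filter, Finset.mem_insert, Finset.mem_Ico]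
        constructor
        · rintro ⟨hkI, hki⟩
          rcases eq_or_ne k 1 with rfl | hk1
          · exact Or.inl rfl
          · have := hIcc k hkI
            exact Or.inr ⟨⟨by omega, hki⟩, hkI⟩
        · rintro (rfl | ⟨⟨hk2, hki⟩, hkI⟩)
          · exact ⟨h1, by omega⟩
          · exact ⟨hkI, hki⟩
      rw [he, Finset.card_insert_of_notMem (by simp)]
    have hB : ((Finset.Ico 2 i).filter (· ∉ I)).card = rkS J i := by
      rw [rkS]
      congr 1
      ext k
      simp only [Finset.mem_filter, Finset.mem_Ico]
      constructor
      · rintro ⟨⟨hk2, hki⟩, hkI⟩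
        have hk : k ∈ I ∪ J := hpart ▸ Finset.mem_Icc.2 ⟨by omega, by omega⟩
        rcases Finset.mem_union.1 hk with h | h
        · exact absurd h hkI
        · exact ⟨h, hki⟩
      · rintro ⟨hkJ, hki⟩
        have hkI : k ∉ I := fun h => (Finset.disjoint_left.1 hdisj h) hkJ
        have := hJcc k hkJ
        have hk1 : k ≠ 1 := fun he => h1J (he ▸ hkJ)
        exact ⟨⟨by omega, hki⟩, hkI⟩
    rw [nuOf, Stmt17.lowH_map, hA,
      Stmt17.cbF_key I (n - 2) 2 i _ hi h2i (by omega) rfl, hB]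

end Stmt17

namespace Stmt17
open Finset

def phi (I J : Finset ℕ) : ℕ × ℕ → ℕ × ℕ := fun a => (rkS I a.1, rkS J a.2)

noncomputable def invS (S : Finset ℕ) (x : ℕ) : ℕ :=
  if h : ∃ i ∈ S, rkS S i = x then h.choose else 0

lemma invS_spec {S : Finset ℕ} {x : ℕ} (hx : x < S.card) :
    invS S x ∈ S ∧ rkS S (invS S x) = x := by
  have h : ∃ i ∈ S, rkS S i = x := rkS_surj hx
  rw [invS, dif_pos h]
  exact h.choose_spec

noncomputable def psi (I J : Finset ℕ) : ℕ × ℕ → ℕ × ℕ :=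
  fun p => (invS I p.1, invS J p.2)

variable {n : ℕ} {I J : Finset ℕ}

lemma cross_iff (hpart : I ∪ J = Finset.Icc 1 n) (hdisj : Disjoint I J)
    {i j : ℕ} (hi : i ∈ I) (hj : j ∈ J) : rkS J i ≤ rkS J j ↔ i < j := by
  have hne : i ≠ j := fun he => (Finset.disjoint_left.1 hdisj hi) (he ▸ hj)
  constructor
  · intro h
    rcases lt_or_ge i j with h' | h'
    · exact h'
    · have hji : j < i := by omega
      have := rkS_lt J hj hji
      omega
  · intro h
    exact rkS_mono J (le_of_lt h)

lemma fwd_tree (hn : 2 ≤ n) (hpart : I ∪ J = Finset.Icc 1 n) (hdisj : Disjoint I J)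
    (h1 : 1 ∈ I) (hnJ : n ∈ J) (F : Finset (ℕ × ℕ)) (hF : IsCoveringForest n I J F) :
    IsSchroderTree (nuOf n I) (F.image (phi I J)) := by
  obtain ⟨⟨harcs, hnc⟩, h1n, hcovI, hcovJ⟩ := hF
  have heL := eLen_nu hn hpart hdisj h1 hnJ
  have hnL := nLen_nu hn hpart hdisj h1 hnJ
  have hlow : ∀ {i}, i ∈ I → lowH (nuOf n I) (rkS I i) = rkS J i :=
    fun hi => lowH_rk hn hpart hdisj h1 hnJ hi
  have hIcc : ∀ k ∈ I, 1 ≤ k ∧ k ≤ n := fun k hk =>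
    Finset.mem_Icc.1 (hpart ▸ Finset.mem_union_left _ hk)
  refine ⟨?_, ?_, ?_, ?_, ?_⟩
  · -- region
    rintro p hp
    obtain ⟨a, ha, rfl⟩ := Finset.mem_image.1 hp
    obtain ⟨ha1, ha2, hlt⟩ := harcs a ha
    have hc1 := rkS_lt_card ha1
    have hc2 := rkS_lt_card ha2
    refine ⟨by simp only [phi]; omega, by simp only [phi]; omega, ?_⟩
    show lowH (nuOf n I) (rkS I a.1) ≤ rkS J a.2
    rw [hlow ha1]
    exact rkS_mono J (le_of_lt hlt)
  · -- compatibility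
    rintro p hp q hq ⟨hdir, hreg⟩
    obtain ⟨a, ha, rfl⟩ := Finset.mem_image.1 hp
    obtain ⟨b, hb, rfl⟩ := Finset.mem_image.1 hq
    obtain ⟨ha1, ha2, halt⟩ := harcs a ha
    obtain ⟨hb1, hb2, hblt⟩ := harcs b hb
    simp only [phi] at hdir hreg
    rcases hdir with ⟨hd1, hd2⟩ | ⟨hd1, hd2⟩
    · have hmax : max (rkS I a.1) (rkS I b.1) = rkS I b.1 := max_eq_right (le_of_lt hd1)
      have hmin : min (rkS J a.2) (rkS J b.2) = rkS J a.2 := min_eq_left (le_of_lt hd2)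
      simp only [InRegion, hmax, hmin] at hreg
      have hba : b.1 < a.2 := (cross_iff hpart hdisj hb1 ha2).1 (by rw [← hlow hb1]; exact hreg.2.2)
      have haa : a.1 < b.1 := (rkS_lt_iff ha1 hb1).1 hd1
      have hjj : a.2 < b.2 := (rkS_lt_iff ha2 hb2).1 hd2
      exact hnc a ha b hb ⟨haa, hba, hjj⟩
    · have hmax : max (rkS I a.1) (rkS I b.1) = rkS I a.1 := max_eq_left (le_of_lt hd1)
      have hmin : min (rkS J a.2) (rkS J b.2) = rkS J b.2 := min_eq_right (le_of_lt hd2)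
      simp only [InRegion, hmax, hmin] at hreg
      have hab : a.1 < b.2 := (cross_iff hpart hdisj ha1 hb2).1 (by rw [← hlow ha1]; exact hreg.2.2)
      have hbb : b.1 < a.1 := (rkS_lt_iff hb1 ha1).1 hd1
      have hjj : b.2 < a.2 := (rkS_lt_iff hb2 ha2).1 hd2
      exact hnc b hb a ha ⟨hbb, hab, hjj⟩
  · -- root
    refine Finset.mem_image.2 ⟨(1, n), h1n, ?_⟩
    have hr1 : rkS I 1 = 0 := rk_one_of_subset (fun k hk => (hIcc k hk).1)
    have hrn : rkS J n = nLen (nuOf n I) := rkJ_n hn hpart hdisj h1 hnJ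
    simp only [phi]
    exact Prod.ext hr1 hrn
  · -- rows
    intro y hy
    obtain ⟨j, hj, hrk⟩ := rkS_surj (S := J) (x := y) (by omega)
    obtain ⟨a, ha, ha2⟩ := hcovJ j hj
    refine ⟨phi I J a, Finset.mem_image_of_mem _ ha, ?_⟩
    show rkS J a.2 = y
    rw [ha2, hrk]
  · -- columns
    intro x hx
    obtain ⟨i, hi, hrk⟩ := rkS_surj (S := I) (x := x) (by omega)
    obtain ⟨a, ha, ha1⟩ := hcovI i hi
    refine ⟨phi I J a, Finset.mem_image_of_mem _ ha, ?_⟩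
    show rkS I a.1 = x
    rw [ha1, hrk]

end Stmt17

namespace Stmt17
open Finset

variable {n : ℕ} {I J : Finset ℕ}

lemma bwd_forest (hn : 2 ≤ n) (hpart : I ∪ J = Finset.Icc 1 n) (hdisj : Disjoint I J)
    (h1 : 1 ∈ I) (hnJ : n ∈ J) (T : Finset (ℕ × ℕ)) (hT : IsSchroderTree (nuOf n I) T) :
    IsCoveringForest n I J (T.image (psi I J)) ∧ (T.image (psi I J)).image (phi I J) = T := by
  obtain ⟨hTreg, hTcompat, hTroot, hTrows, hTcols⟩ := hT
  have heL := eLen_nu hn hpart hdisj h1 hnJ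
  have hnL := nLen_nu hn hpart hdisj h1 hnJ
  have hlow : ∀ {i}, i ∈ I → lowH (nuOf n I) (rkS I i) = rkS J i :=
    fun hi => lowH_rk hn hpart hdisj h1 hnJ hi
  have hIcc : ∀ k ∈ I, 1 ≤ k ∧ k ≤ n := fun k hk =>
    Finset.mem_Icc.1 (hpart ▸ Finset.mem_union_left _ hk)
  -- specs for points of T
  have hspec : ∀ p ∈ T, (invS I p.1 ∈ I ∧ rkS I (invS I p.1) = p.1) ∧
      (invS J p.2 ∈ J ∧ rkS J (invS J p.2) = p.2) := by
    intro p hp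
    obtain ⟨hp1, hp2, _⟩ := hTreg p hp
    exact ⟨invS_spec (by omega), invS_spec (by omega)⟩
  constructor
  · refine ⟨⟨?_, ?_⟩, ?_, ?_, ?_⟩
    · -- arcs
      rintro a ha
      obtain ⟨p, hp, rfl⟩ := Finset.mem_image.1 ha
      obtain ⟨⟨hiI, hirk⟩, ⟨hjJ, hjrk⟩⟩ := hspec p hp
      obtain ⟨hp1, hp2, hp3⟩ := hTreg p hp
      refine ⟨hiI, hjJ, ?_⟩
      apply (cross_iff hpart hdisj hiI hjJ).1
      calc rkS J (invS I p.1) = lowH (nuOf n I) p.1 := by rw [← hlow hiI, hirk]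
        _ ≤ p.2 := hp3
        _ = rkS J (invS J p.2) := hjrk.symm
    · -- noncrossing
      rintro a ha a' ha' ⟨hc1, hc2, hc3⟩
      obtain ⟨p, hp, rfl⟩ := Finset.mem_image.1 ha
      obtain ⟨q, hq, rfl⟩ := Finset.mem_image.1 ha'
      obtain ⟨⟨hiI, hirk⟩, ⟨hjJ, hjrk⟩⟩ := hspec p hp
      obtain ⟨⟨hiI', hirk'⟩, ⟨hjJ', hjrk'⟩⟩ := hspec q hq
      simp only [psi] at hc1 hc2 hc3
      have hpq1 : p.1 < q.1 := by
        have := rkS_lt I hiI hc1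
        rw [hirk, hirk'] at this
        exact this
      have hpq2 : p.2 < q.2 := by
        have := rkS_lt J hjJ hc3
        rw [hjrk, hjrk'] at this
        exact this
      apply hTcompat p hp q hq
      refine ⟨Or.inl ⟨hpq1, hpq2⟩, ?_, ?_, ?_⟩
      · simp only [max_eq_right (le_of_lt hpq1)]
        exact (hTreg q hq).1
      · simp only [min_eq_left (le_of_lt hpq2)]
        exact (hTreg p hp).2.1
      · simp only [max_eq_right (le_of_lt hpq1), min_eq_left (le_of_lt hpq2)]
        calc lowH (nuOf n I) q.1 = rkS J (invS I q.1) := by rw [← hlow hiI', hirk']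
          _ ≤ rkS J (invS J p.2) := rkS_mono J (le_of_lt hc2)
          _ = p.2 := hjrk
    · -- (1, n) ∈ image
      refine Finset.mem_image.2 ⟨(0, nLen (nuOf n I)), hTroot, ?_⟩
      have hIpos : 0 < I.card := Finset.card_pos.2 ⟨1, h1⟩
      obtain ⟨hiI, hirk⟩ := invS_spec (S := I) (x := 0) hIpos
      obtain ⟨hjJ, hjrk⟩ := invS_spec (S := J) (x := nLen (nuOf n I)) (by omega)
      have hr1 : rkS I 1 = 0 := rk_one_of_subset (fun k hk => (hIcc k hk).1)
      have hrn : rkS J n = nLen (nuOf n I) := rkJ_n hn hpart hdisj h1 hnJ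
      have e1 : invS I 0 = 1 := rkS_injOn hiI h1 (by rw [hirk, hr1])
      have e2 : invS J (nLen (nuOf n I)) = n := rkS_injOn hjJ hnJ (by rw [hjrk, hrn])
      simp only [psi]
      exact Prod.ext e1 e2
    · -- every i ∈ I covered
      intro i hi
      have hx : rkS I i ≤ eLen (nuOf n I) := by have := rkS_lt_card hi; omega
      obtain ⟨p, hp, hp1⟩ := hTcols (rkS I i) hx
      refine ⟨psi I J p, Finset.mem_image_of_mem _ hp, ?_⟩
      obtain ⟨⟨hiI, hirk⟩, _⟩ := hspec p hp
      show invS I p.1 = i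
      exact rkS_injOn hiI hi (by rw [hirk, hp1])
    · -- every j ∈ J covered
      intro j hj
      have hy : rkS J j ≤ nLen (nuOf n I) := by have := rkS_lt_card hj; omega
      obtain ⟨p, hp, hp2⟩ := hTrows (rkS J j) hy
      refine ⟨psi I J p, Finset.mem_image_of_mem _ hp, ?_⟩
      obtain ⟨_, ⟨hjJ, hjrk⟩⟩ := hspec p hp
      show invS J p.2 = j
      exact rkS_injOn hjJ hj (by rw [hjrk, hp2])
  · -- round trip
    rw [Finset.image_image]
    have heq : ∀ p ∈ T, (phi I J ∘ psi I J) p = p := by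
      intro p hp
      obtain ⟨⟨_, hirk⟩, ⟨_, hjrk⟩⟩ := hspec p hp
      simp only [Function.comp, phi, psi]
      exact Prod.ext hirk hjrk
    calc T.image (phi I J ∘ psi I J) = T.image id := Finset.image_congr heq
      _ = T := Finset.image_id

lemma image_phi_inj (F F' : Finset (ℕ × ℕ)) (hF : IsCoveringForest n I J F)
    (hF' : IsCoveringForest n I J F') (h : F.image (phi I J) = F'.image (phi I J)) :
    F = F' := by
  have hsub : ∀ (G G' : Finset (ℕ × ℕ)), IsCoveringForest n I J G →
      IsCoveringForest n I J G' → G.image (phi I J) = G'.image (phi I J) → G ⊆ G' := by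
    intro G G' hG hG' hgg a ha
    have : phi I J a ∈ G'.image (phi I J) := hgg ▸ Finset.mem_image_of_mem _ ha
    obtain ⟨b, hb, hba⟩ := Finset.mem_image.1 this
    obtain ⟨ha1, ha2, _⟩ := hG.1.1 a ha
    obtain ⟨hb1, hb2, _⟩ := hG'.1.1 b hb
    have h1 : b.1 = a.1 := rkS_injOn hb1 ha1 (congrArg Prod.fst hba)
    have h2 : b.2 = a.2 := rkS_injOn hb2 ha2 (congrArg Prod.snd hba)
    have hba' : b = a := Prod.ext h1 h2
    exact hba' ▸ hb
  exact Finset.Subset.antisymm (hsub F F' hF hF' h) (hsub F' F hF' hF h.symm)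

end Stmt17

/-- Covering `(I,J̄)`-forests are in bijection with ν-Schröder trees, where
ν is the lattice path read from the interleaving of `I` and `J̄`; the bijection sends the arc
with endpoint labels `(E_i, N_j)` to the lattice point `(i,j)`. -/
theorem coveringForests_equiv_schroderTrees (n : ℕ) (I J : Finset ℕ) (hn : 2 ≤ n)
    (hpart : I ∪ J = Finset.Icc 1 n) (hdisj : Disjoint I J) (h1 : 1 ∈ I) (hnJ : n ∈ J) :
    ∃ e : {F : Finset (ℕ × ℕ) // IsCoveringForest n I J F}
            ≃ {T : Finset (ℕ × ℕ) // IsSchroderTree (nuOf n I) T},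
      ∀ F, (e F : Finset (ℕ × ℕ))
        = (F : Finset (ℕ × ℕ)).image
            (fun a => ((I.filter (· < a.1)).card, (J.filter (· < a.2)).card)) := by
  classical
  have hbij : Function.Bijective
      (fun F : {F : Finset (ℕ × ℕ) // IsCoveringForest n I J F} =>
        (⟨(F : Finset (ℕ × ℕ)).image (Stmt17.phi I J),
          Stmt17.fwd_tree hn hpart hdisj h1 hnJ F.1 F.2⟩ :
          {T : Finset (ℕ × ℕ) // IsSchroderTree (nuOf n I) T})) := by
    constructor
    · intro F F' h
      exact Subtype.ext (Stmt17.image_phi_inj F.1 F'.1 F.2 F'.2 (congrArg Subtype.val h))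
    · intro T
      obtain ⟨hcov, himg⟩ := Stmt17.bwd_forest hn hpart hdisj h1 hnJ T.1 T.2
      exact ⟨⟨T.1.image (Stmt17.psi I J), hcov⟩, Subtype.ext himg⟩
  exact ⟨Equiv.ofBijective _ hbij, fun F => rfl⟩
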